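/- The integral ∫_0^1 √2 / (w(t)·√(1+w(t))) dt, where w(t) = √(1−t²), equals 2·log(1+√2). -/

import Mathlib

open Real intervalIntegral MeasureTheory

noncomputable def F8 (t : ℝ) : ℝ :=
  2 * Real.log (Real.sqrt 2 + Real.sqrt (1 - Real.sqrt (1 - t^2)))
    - Real.log (1 + Real.sqrt (1 - t^2))

lemma f8_deriv {t : ℝ} (ht : t ∈ Set.Ioo (0:ℝ) 1) :
    HasDerivAt F8
      (Real.sqrt 2 / (Real.sqrt (1 - t^2) * Real.sqrt (1 + Real.sqrt (1 - t^2)))) t := by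
  obtain ⟨ht0, ht1⟩ := ht
  set u := Real.sqrt (1 - t^2) with hu
  have ht2 : t^2 < 1 := by nlinarith
  have hupos : 0 < u := Real.sqrt_pos.2 (by nlinarith)
  have hu2 : u^2 = 1 - t^2 := Real.sq_sqrt (by nlinarith)
  have hult : u < 1 := by nlinarith
  set A := Real.sqrt (1 - u) with hA
  have hApos : 0 < A := Real.sqrt_pos.2 (by linarith)
  have hA2 : A^2 = 1 - u := Real.sq_sqrt (by linarith)
  set s := Real.sqrt (1 + u) with hs
  have hspos : 0 < s := Real.sqrt_pos.2 (by linarith)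
  have hs2 : s^2 = 1 + u := Real.sq_sqrt (by linarith)
  have hsA : s * A = t := by
    have h : (s * A)^2 = t^2 := by rw [mul_pow, hs2, hA2]; nlinarith
    nlinarith [mul_pos hspos hApos]
  -- derivative of u
  have hu' : HasDerivAt (fun x => Real.sqrt (1 - x^2)) (-t / u) t := by
    have h1 : HasDerivAt (fun x : ℝ => 1 - x^2) (-(2*t)) t := by
      simpa using ((hasDerivAt_pow 2 t).const_sub 1)
    have h2 := h1.sqrt (by nlinarith)
    convert h2 using 1
    rw [← hu]
    field_simp
  -- derivative of A
  have hA' : HasDerivAt (fun x => Real.sqrt (1 - Real.sqrt (1 - x^2))) (t / (2 * A * u)) t := by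
    have h1 : HasDerivAt (fun x => 1 - Real.sqrt (1 - x^2)) (t / u) t := by
      simpa [neg_div] using hu'.const_sub 1
    have h2 := h1.sqrt (by rw [← hu]; nlinarith)
    convert h2 using 1
    rw [← hu, ← hA, div_div]
    ring
  have hlog1 : HasDerivAt (fun x => Real.log (Real.sqrt 2 + Real.sqrt (1 - Real.sqrt (1 - x^2))))
      ((t / (2 * A * u)) / (Real.sqrt 2 + A)) t := by
    have h1 : HasDerivAt (fun x => Real.sqrt 2 + Real.sqrt (1 - Real.sqrt (1 - x^2)))
        (t / (2 * A * u)) t := hA'.const_add _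
    have := h1.log (by rw [← hA]; positivity)
    simpa [← hA] using this
  have hlog2 : HasDerivAt (fun x => Real.log (1 + Real.sqrt (1 - x^2)))
      ((-t / u) / (1 + u)) t := by
    have h1 : HasDerivAt (fun x => 1 + Real.sqrt (1 - x^2)) (-t / u) t := hu'.const_add 1
    have := h1.log (by rw [← hu]; positivity)
    simpa [← hu] using this
  have hF : HasDerivAt F8
      (2 * ((t / (2 * A * u)) / (Real.sqrt 2 + A)) - (-t / u) / (1 + u)) t := by
    unfold F8
    exact (hlog1.const_mul 2).sub hlog2
  convert hF using 1
  have h2 : Real.sqrt 2 ^ 2 = 2 := Real.sq_sqrt (by norm_num)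
  have hsqrt2 : (0:ℝ) < Real.sqrt 2 := by positivity
  rw [← hsA]
  field_simp
  linear_combination (1+u) * h2 - (1+u+A*Real.sqrt 2+A^2) * hs2
    - (1+u) * hA2

lemma f8_integrable :
    IntervalIntegrable
      (fun t => Real.sqrt 2 / (Real.sqrt (1 - t^2) * Real.sqrt (1 + Real.sqrt (1 - t^2))))
      volume 0 1 := by
  have hg : IntervalIntegrable (fun x : ℝ => Real.sqrt 2 * (1 - x) ^ (-(1/2) : ℝ)) volume 0 1 := by
    have h := (intervalIntegrable_rpow' (a := 0) (b := 1) (r := -(1/2))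
      (by norm_num)).comp_sub_left 1
    simpa using (h.const_mul (Real.sqrt 2)).symm
  apply hg.mono_fun
  · apply Measurable.aestronglyMeasurable
    have m1 : Measurable fun t : ℝ => Real.sqrt (1 - t ^ 2) :=
      (Real.continuous_sqrt.comp (by continuity)).measurable
    have m2 : Measurable fun t : ℝ => Real.sqrt (1 + Real.sqrt (1 - t ^ 2)) :=
      Real.continuous_sqrt.measurable.comp (m1.const_add 1)
    exact measurable_const.div (m1.mul m2)
  · filter_upwards [ae_restrict_mem measurableSet_uIoc] with x hx
    rw [Set.uIoc_of_le (by norm_num : (0:ℝ) ≤ 1)] at hx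
    obtain ⟨hx0, hx1⟩ := hx
    simp only [Real.norm_eq_abs]
    rw [abs_of_nonneg (by positivity),
      abs_of_nonneg (mul_nonneg (Real.sqrt_nonneg _) (Real.rpow_nonneg (by linarith) _))]
    rcases eq_or_lt_of_le hx1 with rfl | hx1'
    · norm_num
    · have hu : Real.sqrt (1 - x) ≤ Real.sqrt (1 - x^2) :=
        Real.sqrt_le_sqrt (by nlinarith)
      have hup : 0 < Real.sqrt (1 - x) := Real.sqrt_pos.2 (by linarith)
      have hs1 : 1 ≤ Real.sqrt (1 + Real.sqrt (1 - x^2)) := by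
        exact Real.one_le_sqrt.mpr (by linarith [Real.sqrt_nonneg (1 - x^2)])
      have hrw : (1 - x) ^ (-(1/2) : ℝ) = (Real.sqrt (1 - x))⁻¹ := by
        rw [Real.rpow_neg (by linarith), Real.sqrt_eq_rpow]
      rw [hrw, ← div_eq_mul_inv]
      have hle : Real.sqrt (1 - x) ≤
          Real.sqrt (1 - x^2) * Real.sqrt (1 + Real.sqrt (1 - x^2)) :=
        hu.trans (le_mul_of_one_le_right (Real.sqrt_nonneg _) hs1)
      exact div_le_div_of_nonneg_left (by positivity) hup hle

theorem stmt8 :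
    ∫ t in (0:ℝ)..1,
        Real.sqrt 2 / (Real.sqrt (1 - t^2) * Real.sqrt (1 + Real.sqrt (1 - t^2))) =
      2 * Real.log (1 + Real.sqrt 2) := by
  have hc1 : Continuous (fun t : ℝ => Real.sqrt (1 - t^2)) :=
    Real.continuous_sqrt.comp (by continuity)
  have hc2 : Continuous (fun t : ℝ => Real.sqrt (1 - Real.sqrt (1 - t^2))) :=
    Real.continuous_sqrt.comp (continuous_const.sub hc1)
  have hcont : Continuous F8 := by
    unfold F8
    apply Continuous.sub
    · apply continuous_const.mul
      apply (continuous_const.add hc2).log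
      intro x
      simp only [Pi.add_apply, Pi.sub_apply, Function.comp_apply]
      positivity
    · apply (continuous_const.add hc1).log
      intro x
      simp only [Pi.add_apply, Pi.sub_apply, Function.comp_apply]
      positivity
  rw [integral_eq_sub_of_hasDerivAt_of_le (by norm_num) hcont.continuousOn
      (fun x hx => f8_deriv hx) f8_integrable]
  unfold F8
  norm_num [Real.log_sqrt]
  ring
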